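/- A monic polynomial with rational coefficients all of whose complex roots have modulus exactly 1 has only roots of unity as roots (Kronecker's theorem for rational polynomials, via clearing denominators). -/

import Mathlib

open Polynomial

/-- Kronecker's theorem for rational polynomials: a monic rational
polynomial dividing a monic integer polynomial, all of whose complex roots have
modulus exactly `1`, has only roots of unity as roots. -/
theorem stmt_4 (η : Polynomial ℚ) (hmonic : η.Monic)
    (g : Polynomial ℤ) (hg : g.Monic) (hdvd : η ∣ g.map (algebraMap ℤ ℚ))
    (hmod : ∀ z : ℂ, ((η.map (algebraMap ℚ ℂ)).IsRoot z) → ‖z‖ = 1) :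
    ∀ z : ℂ, ((η.map (algebraMap ℚ ℂ)).IsRoot z) → ∃ n : ℕ, 0 < n ∧ z ^ n = 1 := by
  intro z hz
  have haev : Polynomial.aeval z η = 0 := by
    rwa [Polynomial.aeval_def, ← Polynomial.eval_map]
  -- z is an algebraic integer
  have hzint : IsIntegral ℤ z := by
    refine ⟨g, hg, ?_⟩
    obtain ⟨c, hc⟩ := hdvd
    have h0 : Polynomial.aeval z (g.map (algebraMap ℤ ℚ)) = 0 := by
      rw [hc, map_mul, haev, zero_mul]
    rwa [Polynomial.aeval_map_algebraMap, Polynomial.aeval_def] at h0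
  have hzQ : IsIntegral ℚ z := hzint.tower_top
  -- the number field K = ℚ⟮z⟯
  let K := IntermediateField.adjoin ℚ {z}
  haveI : FiniteDimensional ℚ K := IntermediateField.adjoin.finiteDimensional hzQ
  haveI : NumberField K := ⟨⟩
  let x : K := ⟨z, IntermediateField.mem_adjoin_simple_self ℚ z⟩
  have hxz : (algebraMap K ℂ) x = z := rfl
  have hxint : IsIntegral ℤ x :=
    (isIntegral_algebraMap_iff (algebraMap K ℂ).injective).mp (hxz ▸ hzint)
  have hmp : minpoly ℚ x = minpoly ℚ z := by
    rw [← hxz]; exact (minpoly.algebraMap_eq (A := ℚ) (algebraMap K ℂ).injective x).symm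
  have hnorm : ∀ φ : (K →+* ℂ), ‖φ x‖ = 1 := by
    intro φ
    have : φ x ∈ (minpoly ℚ x).rootSet ℂ := by
      rw [← NumberField.Embeddings.range_eval_eq_rootSet_minpoly K ℂ x]
      exact ⟨φ, rfl⟩
    rw [Polynomial.mem_rootSet, hmp] at this
    have hdvd2 : minpoly ℚ z ∣ η := minpoly.dvd ℚ z haev
    obtain ⟨c, hc⟩ := hdvd2
    have : (η.map (algebraMap ℚ ℂ)).IsRoot (φ x) := by
      rw [hc, Polynomial.map_mul, Polynomial.IsRoot, Polynomial.eval_mul]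
      have h2 := this.2
      rw [Polynomial.aeval_def, ← Polynomial.eval_map] at h2
      rw [h2, zero_mul]
    exact hmod _ this
  obtain ⟨n, hn, hpow⟩ := NumberField.Embeddings.pow_eq_one_of_norm_eq_one K ℂ hxint hnorm
  refine ⟨n, hn, ?_⟩
  have := congrArg (algebraMap K ℂ) hpow
  rwa [map_pow, hxz, map_one] at this
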